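/- Let E be a complex Hilbert space, let H be a bounded selfadjoint operator on E with H² ≥ g²·1 for some g ≥ 0, and let X be a bounded operator on E with X*X ≥ m²·1 and XX* ≥ m²·1 for some m ≥ 0. Then the block operator L = [[−H, X*], [X, H]] on E ⊕ E is selfadjoint and satisfies L² ≥ (g² + m² − ‖HX − XH‖)·1. In particular, if ‖HX − XH‖ < g² + m², then L is invertible. -/

import Mathlib

open ContinuousLinearMap in
/-- The block operator `[[A, B], [C, D]]` on the Hilbert space direct sum `E ⊕ F`
(realized as `WithLp 2 (E × F)`), acting by `(x, y) ↦ (A x + B y, C x + D y)`. -/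
noncomputable def blockOp {E F : Type*} [NormedAddCommGroup E] [InnerProductSpace ℂ E]
    [NormedAddCommGroup F] [InnerProductSpace ℂ F]
    (A : E →L[ℂ] E) (B : F →L[ℂ] E) (C : E →L[ℂ] F) (D : F →L[ℂ] F) :
    WithLp 2 (E × F) →L[ℂ] WithLp 2 (E × F) :=
  ((WithLp.prodContinuousLinearEquiv 2 ℂ E F).symm.toContinuousLinearMap.comp
    ((A.comp (fst ℂ E F) + B.comp (snd ℂ E F)).prod
      (C.comp (fst ℂ E F) + D.comp (snd ℂ E F)))).comp
    (WithLp.prodContinuousLinearEquiv 2 ℂ E F).toContinuousLinearMap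

open scoped ComplexInnerProductSpace in
/-- A selfadjoint operator bounded below is a unit. -/
lemma isUnit_of_selfadjoint_lowerbound {E : Type*} [NormedAddCommGroup E]
    [InnerProductSpace ℂ E] [CompleteSpace E] (T : E →L[ℂ] E) (hT : IsSelfAdjoint T)
    (c : ℝ) (hc : 0 < c) (hb : ∀ v, c * ‖v‖ ≤ ‖T v‖) : IsUnit T := by
  have hTadj : ContinuousLinearMap.adjoint T = T := by
    rwa [← ContinuousLinearMap.star_eq_adjoint]
  have hanti : AntilipschitzWith ⟨c⁻¹, by positivity⟩ T := by
    apply T.antilipschitz_of_bound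
    intro x
    change ‖x‖ ≤ c⁻¹ * ‖T x‖
    rw [← div_eq_inv_mul, le_div_iff₀ hc]
    have := hb x
    nlinarith
  have hrange : (LinearMap.range (T : E →ₗ[ℂ] E)).topologicalClosure = ⊤ := by
    rw [Submodule.topologicalClosure_eq_top_iff, Submodule.eq_bot_iff]
    intro x hx
    have hx' := (Submodule.mem_orthogonal _ x).mp hx
    have hTx : T x = 0 := by
      have h0 : ⟪T x, T x⟫ = 0 := by
        have h := ContinuousLinearMap.adjoint_inner_left T x (T x)
        rw [hTadj] at h
        rw [← h]
        exact hx' (T (T x)) ⟨T x, rfl⟩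
      exact inner_self_eq_zero.mp h0
    have := hb x
    rw [hTx, norm_zero] at this
    have hxn : ‖x‖ = 0 := le_antisymm (by nlinarith [norm_nonneg x]) (norm_nonneg x)
    exact norm_eq_zero.mp hxn
  have hbij : Function.Bijective T :=
    (T.bijective_iff_dense_range_and_antilipschitz).mpr ⟨hrange, ⟨_, hanti⟩⟩
  let e := ContinuousLinearEquiv.ofBijective T
    (LinearMap.ker_eq_bot.mpr hbij.1)
    (LinearMap.range_eq_top.mpr hbij.2)
  have heT : ∀ x, e x = T x := fun x => rfl
  refine ⟨⟨T, e.symm.toContinuousLinearMap, ?_, ?_⟩, rfl⟩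
  · ext x
    have := e.apply_symm_apply x
    rw [heT] at this
    simpa [ContinuousLinearMap.mul_apply] using this
  · ext x
    have := e.symm_apply_apply x
    rw [heT] at this
    simpa [ContinuousLinearMap.mul_apply] using this

open scoped ComplexInnerProductSpace in
/-- `r•1 ≤ T†T` gives a norm lower bound. -/
lemma norm_sq_lower_of_le {E : Type*} [NormedAddCommGroup E] [InnerProductSpace ℂ E]
    [CompleteSpace E] (T : E →L[ℂ] E) (r : ℝ)
    (h : ((r : ℂ)) • (1 : E →L[ℂ] E) ≤ ContinuousLinearMap.adjoint T * T) (x : E) :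
    r * ‖x‖ ^ 2 ≤ ‖T x‖ ^ 2 := by
  rw [ContinuousLinearMap.le_def] at h
  have h2 := h.2 x
  simp only [ContinuousLinearMap.reApplyInnerSelf, ContinuousLinearMap.sub_apply,
    ContinuousLinearMap.smul_apply, ContinuousLinearMap.one_apply,
    ContinuousLinearMap.mul_apply, inner_sub_left, inner_smul_left, map_sub,
    ContinuousLinearMap.adjoint_inner_left] at h2
  have h3 : RCLike.re ⟪T x, T x⟫ = ‖T x‖ ^ 2 := inner_self_eq_norm_sq (T x)
  have h4 : RCLike.re ((starRingEnd ℂ) (r : ℂ) * ⟪x, x⟫) = r * ‖x‖ ^ 2 := by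
    rw [Complex.conj_ofReal, RCLike.re_to_complex, Complex.re_ofReal_mul,
      ← RCLike.re_to_complex, inner_self_eq_norm_sq]
  rw [h3, h4] at h2
  linarith

set_option maxHeartbeats 1000000 in
open scoped ComplexInnerProductSpace in
/-- Master gap estimate: if `H² ≥ g²·1`, `X*X ≥ m²·1` and `XX* ≥ m²·1`, then the block
operator `L = [[−H, X*], [X, H]]` is selfadjoint, satisfies
`L² ≥ (g² + m² − ‖HX − XH‖)·1`, and is invertible when `‖HX − XH‖ < g² + m²`. -/
theorem localizer_master_gap {E : Type*} [NormedAddCommGroup E] [InnerProductSpace ℂ E]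
    [CompleteSpace E] (H X : E →L[ℂ] E) (hH : IsSelfAdjoint H)
    (g m : ℝ) (hg : 0 ≤ g) (hm : 0 ≤ m)
    (hH2 : ((g ^ 2 : ℝ) : ℂ) • (1 : E →L[ℂ] E) ≤ H ^ 2)
    (hX1 : ((m ^ 2 : ℝ) : ℂ) • (1 : E →L[ℂ] E) ≤ ContinuousLinearMap.adjoint X * X)
    (hX2 : ((m ^ 2 : ℝ) : ℂ) • (1 : E →L[ℂ] E) ≤ X * ContinuousLinearMap.adjoint X) :
    IsSelfAdjoint (blockOp (-H) (ContinuousLinearMap.adjoint X) X H) ∧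
    ((g ^ 2 + m ^ 2 - ‖H * X - X * H‖ : ℝ) : ℂ) •
        (1 : WithLp 2 (E × E) →L[ℂ] WithLp 2 (E × E)) ≤
      (blockOp (-H) (ContinuousLinearMap.adjoint X) X H) ^ 2 ∧
    (‖H * X - X * H‖ < g ^ 2 + m ^ 2 →
      IsUnit (blockOp (-H) (ContinuousLinearMap.adjoint X) X H)) := by
  set L := blockOp (-H) (ContinuousLinearMap.adjoint X) X H with hLdef
  set K := H * X - X * H with hKdef
  have hHadj : ContinuousLinearMap.adjoint H = H := by
    rwa [← ContinuousLinearMap.star_eq_adjoint]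
  have hHs : ∀ a b : E, ⟪H a, b⟫ = ⟪a, H b⟫ := by
    intro a b
    have h := ContinuousLinearMap.adjoint_inner_left H b a
    rwa [hHadj] at h
  have hL1 : ∀ v : WithLp 2 (E × E),
      (L v).fst = -(H v.fst) + ContinuousLinearMap.adjoint X v.snd := fun _ => rfl
  have hL2 : ∀ v : WithLp 2 (E × E), (L v).snd = X v.fst + H v.snd := fun _ => rfl
  -- L is symmetric
  have hsym : ∀ v w : WithLp 2 (E × E), ⟪L v, w⟫ = ⟪v, L w⟫ := by
    intro v w
    simp only [WithLp.prod_inner_apply, WithLp.ofLp_fst, WithLp.ofLp_snd, hL1, hL2, inner_add_left, inner_add_right,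
      inner_neg_left, inner_neg_right, ContinuousLinearMap.adjoint_inner_left,
      ContinuousLinearMap.adjoint_inner_right, hHs _ _]
    ring
  have hLsa : IsSelfAdjoint L :=
    (ContinuousLinearMap.isSelfAdjoint_iff_isSymmetric).mpr fun v w => hsym v w
  -- lower bounds
  have hH2' : ((g ^ 2 : ℝ) : ℂ) • (1 : E →L[ℂ] E) ≤ ContinuousLinearMap.adjoint H * H := by
    rwa [hHadj, ← pow_two]
  have hX2' : ((m ^ 2 : ℝ) : ℂ) • (1 : E →L[ℂ] E) ≤
      ContinuousLinearMap.adjoint (ContinuousLinearMap.adjoint X) *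
        ContinuousLinearMap.adjoint X := by
    rwa [ContinuousLinearMap.adjoint_adjoint]
  have hbH := norm_sq_lower_of_le H (g ^ 2) hH2'
  have hbX := norm_sq_lower_of_le X (m ^ 2) hX1
  have hbXa := norm_sq_lower_of_le (ContinuousLinearMap.adjoint X) (m ^ 2) hX2'
  -- cross term identity
  have hid : ∀ x y : E, ⟪X x, H y⟫ - ⟪H x, ContinuousLinearMap.adjoint X y⟫ = ⟪K x, y⟫ := by
    intro x y
    rw [← hHs (X x) y, ContinuousLinearMap.adjoint_inner_right]
    simp only [hKdef, ContinuousLinearMap.sub_apply, ContinuousLinearMap.mul_apply,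
      inner_sub_left]
  -- the key quantitative estimate
  have key : ∀ v : WithLp 2 (E × E),
      (g ^ 2 + m ^ 2 - ‖K‖) * ‖v‖ ^ 2 ≤ ‖L v‖ ^ 2 := by
    intro v
    have hnv : ‖v‖ ^ 2 = ‖v.fst‖ ^ 2 + ‖v.snd‖ ^ 2 := WithLp.prod_norm_sq_eq_of_L2 v
    have hnL : ‖L v‖ ^ 2 =
        ‖-(H v.fst) + ContinuousLinearMap.adjoint X v.snd‖ ^ 2 + ‖X v.fst + H v.snd‖ ^ 2 := by
      rw [WithLp.prod_norm_sq_eq_of_L2, hL1, hL2]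
    have e1 : ‖-(H v.fst) + ContinuousLinearMap.adjoint X v.snd‖ ^ 2 =
        ‖H v.fst‖ ^ 2 + ‖ContinuousLinearMap.adjoint X v.snd‖ ^ 2 -
          2 * RCLike.re ⟪H v.fst, ContinuousLinearMap.adjoint X v.snd⟫ := by
      rw [@norm_add_sq ℂ]
      simp only [inner_neg_left, norm_neg, map_neg]
      ring
    have e2 : ‖X v.fst + H v.snd‖ ^ 2 =
        ‖X v.fst‖ ^ 2 + ‖H v.snd‖ ^ 2 + 2 * RCLike.re ⟪X v.fst, H v.snd⟫ := by
      rw [@norm_add_sq ℂ]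
      ring
    have hre : RCLike.re ⟪X v.fst, H v.snd⟫ -
        RCLike.re ⟪H v.fst, ContinuousLinearMap.adjoint X v.snd⟫ =
        RCLike.re ⟪K v.fst, v.snd⟫ := by
      rw [← map_sub, hid v.fst v.snd]
    have hcross : -(‖K‖ * (‖v.fst‖ * ‖v.snd‖)) ≤ RCLike.re ⟪K v.fst, v.snd⟫ := by
      have h1 : |RCLike.re ⟪K v.fst, v.snd⟫| ≤ ‖(⟪K v.fst, v.snd⟫ : ℂ)‖ := RCLike.abs_re_le_norm _
      have h2 : ‖(⟪K v.fst, v.snd⟫ : ℂ)‖ ≤ ‖K v.fst‖ * ‖v.snd‖ := norm_inner_le_norm _ _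
      have h3 : ‖K v.fst‖ ≤ ‖K‖ * ‖v.fst‖ := K.le_opNorm v.fst
      have h4 := neg_abs_le (RCLike.re (⟪K v.fst, v.snd⟫ : ℂ))
      nlinarith [norm_nonneg v.snd]
    have b1 := hbH v.fst
    have b2 := hbH v.snd
    have b3 := hbX v.fst
    have b4 := hbXa v.snd
    rw [hnv, hnL, e1, e2]
    nlinarith [mul_nonneg (norm_nonneg K) (sq_nonneg (‖v.fst‖ - ‖v.snd‖)), hcross, hre]
  -- re ⟪L² v, v⟫ = ‖L v‖²
  have hLsq : ∀ v : WithLp 2 (E × E), RCLike.re ⟪(L ^ 2) v, v⟫ = ‖L v‖ ^ 2 := by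
    intro v
    rw [pow_two, ContinuousLinearMap.mul_apply, hsym (L v) v]
    exact inner_self_eq_norm_sq (L v)
  refine ⟨hLsa, ?_, ?_⟩
  · rw [ContinuousLinearMap.le_def]
    rw [ContinuousLinearMap.isPositive_def']
    constructor
    · apply (hLsa.pow 2).sub
      rw [IsSelfAdjoint, star_smul, star_one, Complex.star_def, Complex.conj_ofReal]
    · intro v
      have hsmul : RCLike.re ⟪(((g ^ 2 + m ^ 2 - ‖K‖ : ℝ) : ℂ) •
          (1 : WithLp 2 (E × E) →L[ℂ] WithLp 2 (E × E))) v, v⟫ =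
          (g ^ 2 + m ^ 2 - ‖K‖) * ‖v‖ ^ 2 := by
        simp only [ContinuousLinearMap.smul_apply, ContinuousLinearMap.one_apply,
          inner_smul_left]
        rw [Complex.conj_ofReal, RCLike.re_to_complex, Complex.re_ofReal_mul,
      ← RCLike.re_to_complex, inner_self_eq_norm_sq]
      simp only [ContinuousLinearMap.reApplyInnerSelf, ContinuousLinearMap.sub_apply,
        inner_sub_left, map_sub]
      rw [hLsq v, hsmul]
      linarith [key v]
  · intro hlt
    set d := g ^ 2 + m ^ 2 - ‖K‖ with hd
    have hdpos : 0 < d := by simp only [hd]; linarith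
    apply isUnit_of_selfadjoint_lowerbound L hLsa (Real.sqrt d) (Real.sqrt_pos.mpr hdpos)
    intro v
    have h1 : Real.sqrt (d * ‖v‖ ^ 2) ≤ Real.sqrt (‖L v‖ ^ 2) := Real.sqrt_le_sqrt (key v)
    rwa [Real.sqrt_mul hdpos.le, Real.sqrt_sq (norm_nonneg _),
      Real.sqrt_sq (norm_nonneg _)] at h1
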